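/- The men-proposing Deferred Acceptance algorithm outputs the woman-pessimal stable matching: for every stable matching μ' of the same instance, every woman weakly prefers her partner under μ' to her DA partner. -/

import Mathlib

open Classical

/-- A strict preference list over `Fin n`, encoded as a permutation whose inverse
gives the rank of each alternative (lower rank = more preferred). -/
abbrev Pref (n : ℕ) := Equiv.Perm (Fin n)

/-- A profile of preference lists, one for each of the `n` agents on one side. -/
abbrev Profile (n : ℕ) := Fin n → Pref n

/-- `a` is strictly preferred to `b` under the list `p`. -/
def SPref {n : ℕ} (p : Pref n) (a b : Fin n) : Prop := p.symm a < p.symm b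

/-- `a` is weakly preferred to `b` under the list `p`. -/
def WPref {n : ℕ} (p : Pref n) (a b : Fin n) : Prop := p.symm a ≤ p.symm b

/-- A matching: a bijection from men to women. -/
abbrev Matching (n : ℕ) := Fin n ≃ Fin n

/-- `(m, w)` is a blocking pair of `μ` w.r.t. men's profile `mp` and women's profile `wp`. -/
def Blocks {n : ℕ} (mp wp : Profile n) (μ : Matching n) (m w : Fin n) : Prop :=
  SPref (mp m) w (μ m) ∧ SPref (wp w) m (μ.symm w)

/-- A matching is stable if it admits no blocking pair. -/
def IsStable {n : ℕ} (mp wp : Profile n) (μ : Matching n) : Prop :=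
  ∀ m w, ¬ Blocks mp wp μ m w

instance {n : ℕ} : Nonempty (Matching n) := ⟨Equiv.refl _⟩

/-- The outcome of the men-proposing Deferred Acceptance algorithm, specified as
the (unique) man-optimal stable matching of the instance `⟨mp, wp⟩`. -/
noncomputable def DA {n : ℕ} (mp wp : Profile n) : Matching n :=
  Classical.epsilon fun μ => IsStable mp wp μ ∧
    ∀ μ' : Matching n, IsStable mp wp μ' → ∀ m, WPref (mp m) (μ m) (μ' m)

/-- An accomplice manipulation at strategy profile `p` (men's reports; women truthful
with profile `wp`) by the pair `(m, w)`, via misreport `q` of man `m`: woman `w`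
strictly benefits and man `m` is not worse off, w.r.t. the true profiles `mp`, `wp`. -/
def AccManip {n : ℕ} (mp wp : Profile n) (p : Profile n) (m w : Fin n) (q : Pref n) : Prop :=
  SPref (wp w) ((DA (Function.update p m q) wp).symm w) ((DA p wp).symm w) ∧
  WPref (mp m) (DA (Function.update p m q) wp m) (DA p wp m)

/-- `p` is a Nash equilibrium of the accomplice manipulation game with strategic pairs `P`. -/
def IsNE {n : ℕ} (mp wp : Profile n) (P : Set (Fin n × Fin n)) (p : Profile n) : Prop :=
  ∀ m w, (m, w) ∈ P → ¬ ∃ q, AccManip mp wp p m w q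

/-- `q` results from the list `cur` by a push-up of the set `X` above `star`
(= the current DA partner): the set of women ranked above `star` in `q` is exactly
the set of those ranked above `star` in `cur` together with `X`. -/
def IsPushUp {n : ℕ} (cur : Pref n) (star : Fin n) (X : Set (Fin n)) (q : Pref n) : Prop :=
  ∀ w, SPref q w star ↔ (SPref cur w star ∨ w ∈ X)

/-- One step of the push-up dynamic: some strategic pair `(m, w) ∈ P` performs a
no-regret push-up accomplice manipulation at profile `p`, yielding `p'`. -/
def PushUpStep {n : ℕ} (mp wp : Profile n) (P : Set (Fin n × Fin n))
    (p p' : Profile n) : Prop :=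
  ∃ m w, (m, w) ∈ P ∧ ∃ X q,
    X ⊆ {w' | SPref (p m) (DA p wp m) w'} ∧
    IsPushUp (p m) (DA p wp m) X q ∧
    p' = Function.update p m q ∧
    SPref (wp w) ((DA p' wp).symm w) ((DA p wp).symm w) ∧
    WPref (mp m) (DA p' wp m) (DA p wp m)

/-- A push-up dynamic: starts at the truthful profile, and at each step performs a
no-regret push-up accomplice manipulation by some strategic pair if one exists,
otherwise stays put. -/
def IsPushUpDynamic {n : ℕ} (mp wp : Profile n) (P : Set (Fin n × Fin n))
    (p : ℕ → Profile n) : Prop :=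
  p 0 = mp ∧ ∀ t,
    PushUpStep mp wp P (p t) (p (t + 1)) ∨
    (p (t + 1) = p t ∧ ¬ ∃ p', PushUpStep mp wp P (p t) p')

/-- A one-for-many manipulation at profile `p` by man `m` for beneficiary set `B`,
via misreport `q`: every woman in `B` weakly benefits, some woman in `B` strictly
benefits, and `m` is not worse off (true preferences). -/
def OFMManip {n : ℕ} (mp wp : Profile n) (p : Profile n) (m : Fin n)
    (B : Set (Fin n)) (q : Pref n) : Prop :=
  (∀ w ∈ B, WPref (wp w) ((DA (Function.update p m q) wp).symm w) ((DA p wp).symm w)) ∧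
  (∃ w ∈ B, SPref (wp w) ((DA (Function.update p m q) wp).symm w) ((DA p wp).symm w)) ∧
  WPref (mp m) (DA (Function.update p m q) wp m) (DA p wp m)

/-- Nash equilibrium of the one-for-many manipulation game with strategic men `Pm`
and beneficiary sets `B`. -/
def IsNEOFM {n : ℕ} (mp wp : Profile n) (Pm : Set (Fin n)) (B : Fin n → Set (Fin n))
    (p : Profile n) : Prop :=
  ∀ m ∈ Pm, ¬ ∃ q, OFMManip mp wp p m (B m) q

/-- `q` is obtained from `cur` by promoting (weakly moving up) exactly one man `a`,
leaving the relative order of all other men unchanged. -/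
def Inconspicuous {n : ℕ} (cur q : Pref n) : Prop :=
  ∃ a, (∀ x y, x ≠ a → y ≠ a → (SPref q x y ↔ SPref cur x y)) ∧
    (∀ x, SPref cur a x → SPref q a x)

/-- One step of the inconspicuous dynamic for the woman self-manipulation game:
some strategic woman `w ∈ Pw` performs an optimal inconspicuous self-manipulation
in the current instance `⟨mp, pw⟩`. -/
def InconspicuousStep {n : ℕ} (mp : Profile n) (Pw : Set (Fin n))
    (pw pw' : Profile n) : Prop :=
  ∃ w ∈ Pw, ∃ q,
    pw' = Function.update pw w q ∧
    Inconspicuous (pw w) q ∧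
    SPref (pw w) ((DA mp pw').symm w) ((DA mp pw).symm w) ∧
    ∀ q', WPref (pw w) ((DA mp pw').symm w) ((DA mp (Function.update pw w q')).symm w)

/-- The inconspicuous dynamic of the woman self-manipulation game: starts at the
truthful profile `wp`, and at each step performs an optimal inconspicuous
self-manipulation by some strategic woman if one exists, otherwise stays put. -/
def IsInconspicuousDynamic {n : ℕ} (mp wp : Profile n) (Pw : Set (Fin n))
    (pw : ℕ → Profile n) : Prop :=
  pw 0 = wp ∧ ∀ t,
    InconspicuousStep mp Pw (pw t) (pw (t + 1)) ∨
    (pw (t + 1) = pw t ∧ ¬ ∃ pw', InconspicuousStep mp Pw (pw t) pw')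

namespace DAP

open Finset

variable {n : ℕ}

/-- Rank of an optional partner: `none` (single) is worst, rank `n`. -/
def rk (p : Pref n) : Option (Fin n) → ℕ
  | none => n
  | some a => (p.symm a : ℕ)

lemma rk_le (p : Pref n) (o : Option (Fin n)) : rk p o ≤ n := by
  cases o with
  | none => exact le_rfl
  | some a => exact le_of_lt (Fin.is_lt _)

lemma rk_inj (p : Pref n) {o o' : Option (Fin n)} (h : rk p o = rk p o') : o = o' := by
  cases o with
  | none =>
    cases o' with
    | none => rfl
    | some b => exact absurd h.symm (Nat.ne_of_lt (Fin.is_lt _))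
  | some a =>
    cases o' with
    | none => exact absurd h (Nat.ne_of_lt (Fin.is_lt _))
    | some b =>
      simp only [rk] at h
      exact congrArg some (p.symm.injective (Fin.val_injective h))

/-- Best element of `S` according to `p` (the one with least rank), or `none`. -/
noncomputable def best (p : Pref n) (S : Finset (Fin n)) : Option (Fin n) :=
  if h : S.Nonempty then some (p ((S.image fun a => p.symm a).min' (h.image _))) else none

lemma best_mem {p : Pref n} {S : Finset (Fin n)} {w : Fin n}
    (h : best p S = some w) : w ∈ S := by
  rw [best] at h
  split_ifs at h with hS
  · obtain ⟨a, ha, hae⟩ := Finset.mem_image.mp (Finset.min'_mem (S.image fun a => p.symm a) (hS.image _))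
    rw [← hae] at h
    simp only [Equiv.apply_symm_apply, Option.some.injEq] at h
    rwa [← h]

lemma rk_best_le {p : Pref n} {S : Finset (Fin n)} {w : Fin n} (hw : w ∈ S) :
    rk p (best p S) ≤ (p.symm w : ℕ) := by
  have hS : S.Nonempty := ⟨w, hw⟩
  rw [best, dif_pos hS]
  show ((p.symm (p _) : Fin n) : ℕ) ≤ _
  rw [Equiv.symm_apply_apply]
  exact_mod_cast Finset.min'_le _ _ (Finset.mem_image_of_mem _ hw)

lemma rk_best_mono {p : Pref n} {S S' : Finset (Fin n)} (hSS : S ⊆ S') :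
    rk p (best p S') ≤ rk p (best p S) := by
  cases h : best p S with
  | none => exact (rk_le _ _).trans (by rw [rk])
  | some w => rw [rk]; exact rk_best_le (hSS (best_mem h))

lemma best_eq_none {p : Pref n} {S : Finset (Fin n)} (h : best p S = none) {w : Fin n} :
    w ∉ S := by
  intro hw
  rw [best, dif_pos ⟨w, hw⟩] at h
  exact Option.some_ne_none _ h

variable (mp wp : Profile n)

noncomputable def stepX (y : Fin n → Option (Fin n)) (m : Fin n) : Option (Fin n) :=
  best (mp m) (univ.filter fun w => ((wp w).symm m : ℕ) ≤ rk (wp w) (y w))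

noncomputable def stepY (x : Fin n → Option (Fin n)) (w : Fin n) : Option (Fin n) :=
  best (wp w) (univ.filter fun m => ((mp m).symm w : ℕ) ≤ rk (mp m) (x m))

noncomputable def ch : ℕ → (Fin n → Option (Fin n)) × (Fin n → Option (Fin n))
  | 0 => (fun m => best (mp m) univ, fun _ => none)
  | k+1 => (stepX mp wp (ch k).2, stepY mp wp (ch k).1)

lemma chain_mono : ∀ k,
    (∀ m, rk (mp m) ((ch mp wp k).1 m) ≤ rk (mp m) ((ch mp wp (k+1)).1 m)) ∧
    (∀ w, rk (wp w) ((ch mp wp (k+1)).2 w) ≤ rk (wp w) ((ch mp wp k).2 w)) := by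
  intro k
  induction k with
  | zero =>
    constructor
    · intro m
      cases h : (ch mp wp 1).1 m with
      | none => exact (rk_le _ _).trans (by rw [rk])
      | some w => rw [rk]; exact rk_best_le (Finset.mem_univ w)
    · intro w
      exact (rk_le _ _).trans (by rw [show (ch mp wp 0).2 w = none from rfl, rk])
  | succ k ih =>
    constructor
    · intro m
      apply rk_best_mono
      intro w hw
      rw [Finset.mem_filter] at hw ⊢
      exact ⟨hw.1, hw.2.trans (ih.2 w)⟩
    · intro w
      apply rk_best_mono
      intro m hm
      rw [Finset.mem_filter] at hm ⊢
      exact ⟨hm.1, hm.2.trans (ih.1 m)⟩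

noncomputable def meas (k : ℕ) : ℕ :=
  (∑ m, rk (mp m) ((ch mp wp k).1 m)) + ∑ w, (n - rk (wp w) ((ch mp wp k).2 w))

lemma meas_mono (k : ℕ) : meas mp wp k ≤ meas mp wp (k+1) := by
  apply Nat.add_le_add
  · exact Finset.sum_le_sum fun m _ => (chain_mono mp wp k).1 m
  · exact Finset.sum_le_sum fun w _ => Nat.sub_le_sub_left ((chain_mono mp wp k).2 w) n

lemma meas_le (k : ℕ) : meas mp wp k ≤ n * n + n * n := by
  apply Nat.add_le_add
  · calc (∑ m, rk (mp m) ((ch mp wp k).1 m)) ≤ ∑ _m : Fin n, n :=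
        Finset.sum_le_sum fun m _ => rk_le _ _
      _ = n * n := by simp [mul_comm]
  · calc (∑ w, (n - rk (wp w) ((ch mp wp k).2 w))) ≤ ∑ _w : Fin n, n :=
        Finset.sum_le_sum fun w _ => Nat.sub_le _ _
      _ = n * n := by simp [mul_comm]

lemma eq_of_meas_eq {k : ℕ} (h : meas mp wp (k+1) ≤ meas mp wp k) :
    ch mp wp (k+1) = ch mp wp k := by
  have h1 : (∑ m, rk (mp m) ((ch mp wp k).1 m)) ≤ ∑ m, rk (mp m) ((ch mp wp (k+1)).1 m) :=
    Finset.sum_le_sum fun m _ => (chain_mono mp wp k).1 m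
  have h2 : (∑ w, (n - rk (wp w) ((ch mp wp k).2 w))) ≤
      ∑ w, (n - rk (wp w) ((ch mp wp (k+1)).2 w)) :=
    Finset.sum_le_sum fun w _ => Nat.sub_le_sub_left ((chain_mono mp wp k).2 w) n
  have e1 : (∑ m, rk (mp m) ((ch mp wp k).1 m)) = ∑ m, rk (mp m) ((ch mp wp (k+1)).1 m) := by
    unfold meas at h; omega
  have e2 : (∑ w, (n - rk (wp w) ((ch mp wp k).2 w))) =
      ∑ w, (n - rk (wp w) ((ch mp wp (k+1)).2 w)) := by
    unfold meas at h; omega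
  have p1 := (Finset.sum_eq_sum_iff_of_le (fun m _ => (chain_mono mp wp k).1 m)).mp e1
  have p2 := (Finset.sum_eq_sum_iff_of_le
      (fun w _ => Nat.sub_le_sub_left ((chain_mono mp wp k).2 w) n)).mp e2
  ext1
  · funext m
    exact rk_inj (mp m) (p1 m (Finset.mem_univ m)).symm
  · funext w
    have := p2 w (Finset.mem_univ w)
    have hle1 := rk_le (wp w) ((ch mp wp k).2 w)
    have hle2 := rk_le (wp w) ((ch mp wp (k+1)).2 w)
    exact rk_inj (wp w) (by omega)

lemma exists_fixed : ∃ k, ch mp wp (k+1) = ch mp wp k := by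
  by_contra hc
  push_neg at hc
  have key : ∀ k, k ≤ meas mp wp k := by
    intro k
    induction k with
    | zero => exact Nat.zero_le _
    | succ k ih =>
      have hlt : meas mp wp k < meas mp wp (k+1) := by
        rcases lt_or_ge (meas mp wp k) (meas mp wp (k+1)) with h | h
        · exact h
        · exact absurd (eq_of_meas_eq mp wp h) (hc k)
      omega
  have := key (n * n + n * n + 1)
  have := meas_le mp wp (n * n + n * n + 1)
  omega

lemma invar (μ' : Matching n) (hμ' : IsStable mp wp μ') : ∀ k,
    (∀ m, rk (mp m) ((ch mp wp k).1 m) ≤ ((mp m).symm (μ' m) : ℕ)) ∧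
    (∀ w, ((wp w).symm (μ'.symm w) : ℕ) ≤ rk (wp w) ((ch mp wp k).2 w)) := by
  intro k
  induction k with
  | zero =>
    constructor
    · intro m; exact rk_best_le (Finset.mem_univ _)
    · intro w; exact le_of_lt (Fin.is_lt _)
  | succ k ih =>
    constructor
    · intro m
      have hmem : μ' m ∈ univ.filter
          fun w => ((wp w).symm m : ℕ) ≤ rk (wp w) ((ch mp wp k).2 w) := by
        rw [Finset.mem_filter]
        refine ⟨Finset.mem_univ _, ?_⟩
        have := ih.2 (μ' m)
        rwa [Equiv.symm_apply_apply] at this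
      exact rk_best_le hmem
    · intro w
      cases hy : (ch mp wp (k+1)).2 w with
      | none => exact (le_of_lt (Fin.is_lt _)).trans (by rw [rk])
      | some m' =>
        rw [rk]
        by_contra hlt
        push_neg at hlt
        -- m' is in the acceptance set for w
        have hmem := best_mem hy
        rw [Finset.mem_filter] at hmem
        have hm' : ((mp m').symm w : ℕ) ≤ rk (mp m') ((ch mp wp k).1 m') := hmem.2
        have hx := ih.1 m'
        have hle : ((mp m').symm w : ℕ) ≤ ((mp m').symm (μ' m') : ℕ) := hm'.trans hx
        have hne : w ≠ μ' m' := by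
          intro he
          have : μ'.symm w = m' := by rw [he, Equiv.symm_apply_apply]
          rw [this] at hlt
          exact lt_irrefl _ hlt
        have hstrict : ((mp m').symm w : ℕ) < ((mp m').symm (μ' m') : ℕ) := by
          rcases lt_or_eq_of_le hle with h | h
          · exact h
          · exact absurd (((mp m').symm.injective (Fin.val_injective h))) hne
        exact hμ' m' w ⟨hstrict, hlt⟩

lemma exists_opt : ∃ μ : Matching n, IsStable mp wp μ ∧
    ∀ μ' : Matching n, IsStable mp wp μ' → ∀ m, WPref (mp m) (μ m) (μ' m) := by
  obtain ⟨k, hk⟩ := exists_fixed mp wp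
  set x := (ch mp wp k).1 with hxdef
  set y := (ch mp wp k).2 with hydef
  have hx : ∀ m, x m = stepX mp wp y m := by
    intro m
    have h2 : (ch mp wp (k+1)).1 m = stepX mp wp y m := rfl
    rw [← h2, hk]
  have hy : ∀ w, y w = stepY mp wp x w := by
    intro w
    have h2 : (ch mp wp (k+1)).2 w = stepY mp wp x w := rfl
    rw [← h2, hk]
  -- consistency
  have hcons : ∀ m w, x m = some w → y w = some m := by
    intro m w hxm
    have hsx := hxm
    rw [hx m, stepX] at hsx
    have hacc := best_mem hsx
    rw [Finset.mem_filter] at hacc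
    have hmmem : m ∈ univ.filter fun m' => ((mp m').symm w : ℕ) ≤ rk (mp m') (x m') := by
      rw [Finset.mem_filter]
      exact ⟨Finset.mem_univ _, by rw [hxm, rk]⟩
    have h1 : rk (wp w) (y w) ≤ ((wp w).symm m : ℕ) := by
      rw [hy w, stepY]; exact rk_best_le hmmem
    have h2 : ((wp w).symm m : ℕ) ≤ rk (wp w) (y w) := hacc.2
    exact rk_inj (wp w) (le_antisymm h1 h2)
  have hcons' : ∀ w m, y w = some m → x m = some w := by
    intro w m hym
    have hsy := hym
    rw [hy w, stepY] at hsy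
    have hacc := best_mem hsy
    rw [Finset.mem_filter] at hacc
    have hwmem : w ∈ univ.filter fun w' => ((wp w').symm m : ℕ) ≤ rk (wp w') (y w') := by
      rw [Finset.mem_filter]
      exact ⟨Finset.mem_univ _, by rw [hym, rk]⟩
    have h1 : rk (mp m) (x m) ≤ ((mp m).symm w : ℕ) := by
      rw [hx m, stepX]; exact rk_best_le hwmem
    have h2 : ((mp m).symm w : ℕ) ≤ rk (mp m) (x m) := hacc.2
    exact rk_inj (mp m) (le_antisymm h1 h2)
  -- everyone matched
  have hall : ∀ m, (x m).isSome := by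
    intro m
    cases hxm : x m with
    | some w => rfl
    | none =>
      exfalso
      have hxe := hxm
      rw [hx m, stepX] at hxe
      have hynone : ∀ w, ∃ m', y w = some m' := by
        intro w
        cases hyw : y w with
        | some m' => exact ⟨m', rfl⟩
        | none =>
          exfalso
          have : w ∉ univ.filter fun w' => ((wp w').symm m : ℕ) ≤ rk (wp w') (y w') :=
            best_eq_none hxe
          rw [Finset.mem_filter] at this
          push_neg at this
          have hlt := this (Finset.mem_univ w)
          rw [hyw, rk] at hlt
          exact absurd hlt (not_lt_of_ge (le_of_lt (Fin.is_lt _)))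
      choose g hg using hynone
      have hginj : Function.Injective g := by
        intro w w' he
        have h1 := hcons' w (g w) (hg w)
        have h2 := hcons' w' (g w') (hg w')
        rw [he, h2] at h1
        exact (Option.some_injective _ h1).symm
      have hgsurj := Finite.injective_iff_surjective.mp hginj
      obtain ⟨w, hw⟩ := hgsurj m
      have := hcons' w (g w) (hg w)
      rw [hw, hxm] at this
      exact Option.some_ne_none _ this.symm
  have hfw : ∀ m, ∃ w, x m = some w := by
    intro m
    cases hxm : x m with
    | some w => exact ⟨w, rfl⟩
    | none => exact absurd (hall m) (by rw [hxm]; simp)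
  choose f hf using hfw
  have hyf : ∀ m, y (f m) = some m := fun m => hcons m (f m) (hf m)
  have hfinj : Function.Injective f := by
    intro a b he
    have h1 := hyf a
    rw [he, hyf b] at h1
    exact (Option.some_injective _ h1).symm
  have hfbij : Function.Bijective f := Finite.injective_iff_bijective.mp hfinj
  let μ : Matching n := Equiv.ofBijective f hfbij
  have hμapp : ∀ m, μ m = f m := fun m => rfl
  have hμsymm : ∀ w, y w = some (μ.symm w) := by
    intro w
    have h1 : x (μ.symm w) = some (f (μ.symm w)) := hf _
    have h2 : f (μ.symm w) = w := by
      rw [← hμapp, Equiv.apply_symm_apply]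
    rw [h2] at h1
    exact hcons _ _ h1
  refine ⟨μ, ?_, ?_⟩
  · -- stability
    intro m w hb
    obtain ⟨hb1, hb2⟩ := hb
    have hb1' : ((mp m).symm w : ℕ) < ((mp m).symm (μ m) : ℕ) := hb1
    have hb2' : ((wp w).symm m : ℕ) < ((wp w).symm (μ.symm w) : ℕ) := hb2
    have hwmem : w ∈ univ.filter fun w' => ((wp w').symm m : ℕ) ≤ rk (wp w') (y w') := by
      rw [Finset.mem_filter]
      refine ⟨Finset.mem_univ _, ?_⟩
      rw [hμsymm w, rk]
      exact le_of_lt hb2'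
    have : rk (mp m) (x m) ≤ ((mp m).symm w : ℕ) := by
      rw [hx m, stepX]; exact rk_best_le hwmem
    rw [hf m, rk] at this
    rw [hμapp] at hb1'
    omega
  · -- man-optimality
    intro μ' hμ' m
    have hinv := (invar mp wp μ' hμ' k).1 m
    rw [← hxdef, hf m, rk] at hinv
    show (mp m).symm (μ m) ≤ (mp m).symm (μ' m)
    rw [hμapp]
    exact Fin.le_def.mpr hinv

end DAP

theorem da_woman_pessimal {n : ℕ} (mp wp : Profile n) (μ' : Matching n)
    (hμ' : IsStable mp wp μ') (w : Fin n) :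
    WPref (wp w) (μ'.symm w) ((DA mp wp).symm w) := by
  have hex := DAP.exists_opt mp wp
  have hspec : IsStable mp wp (DA mp wp) ∧
      ∀ μ'' : Matching n, IsStable mp wp μ'' → ∀ m, WPref (mp m) (DA mp wp m) (μ'' m) :=
    Classical.epsilon_spec hex
  set ν := DA mp wp with hν
  set m := ν.symm w with hm
  have hνm : ν m = w := ν.apply_symm_apply w
  by_contra hcon
  have hcon' : (wp w).symm m < (wp w).symm (μ'.symm w) := by
    rw [WPref, not_le] at hcon
    exact hcon
  have h1 : (mp m).symm w ≤ (mp m).symm (μ' m) := by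
    have := hspec.2 μ' hμ' m
    rwa [WPref, hνm] at this
  have hne : w ≠ μ' m := by
    intro he
    have hmm : μ'.symm w = m := by rw [he, Equiv.symm_apply_apply]
    rw [hmm] at hcon'
    exact lt_irrefl _ hcon'
  have hstrict : SPref (mp m) w (μ' m) :=
    lt_of_le_of_ne h1 (fun he => hne ((mp m).symm.injective he))
  exact hμ' m w ⟨hstrict, hcon'⟩
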